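/- For h > 0 and β ∈ ℝ: exp( − ∑_{k=1}^∞ e^{-hk} cos(βk) / (k sinh(hk)) ) = | ( e^{-2h + iβ} ; e^{-2h} )_∞ |². -/

import Mathlib

lemma aux_ratio (E c m : ℝ) (hm : m ≠ 0) (hE : 1 < E) :
    E⁻¹ * c / (m * ((E - E⁻¹) / 2)) = 2 * (E⁻¹ * E⁻¹ * c / m) * (1 - E⁻¹ * E⁻¹)⁻¹ := by
  have hE0 : (0:ℝ) < E := lt_trans one_pos hE
  have hi : E⁻¹ < 1 := inv_lt_one_of_one_lt₀ hE
  have hi0 : 0 < E⁻¹ := inv_pos.mpr hE0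
  have hD : E - E⁻¹ ≠ 0 := by nlinarith
  have h1m : 1 - E⁻¹ * E⁻¹ ≠ 0 := by nlinarith
  have hEE : E * E - 1 ≠ 0 := by nlinarith
  field_simp

set_option maxHeartbeats 1000000 in
theorem stmt17 (h β : ℝ) (hh : 0 < h) :
    Real.exp (-∑' k : ℕ,
        Real.exp (-h * (k + 1)) * Real.cos (β * (k + 1))
          / ((k + 1) * Real.sinh (h * (k + 1))))
      = ‖(∏' j : ℕ,
          (1 - Complex.exp (-2 * h + Complex.I * β) * Complex.exp (-2 * h) ^ j) : ℂ)‖ ^ 2 := by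
  set q : ℝ := Real.exp (-2 * h) with hqdef
  have hq0 : 0 < q := Real.exp_pos _
  have hq1 : q < 1 := Real.exp_lt_one_iff.mpr (by linarith)
  set z : ℂ := Complex.exp (-2 * h + Complex.I * β) with hzdef
  have hQ : Complex.exp (-2 * (h : ℂ)) = ((q : ℝ) : ℂ) := by
    rw [hqdef, Complex.ofReal_exp]; push_cast; ring_nf
  have hzabs : ‖z‖ = q := by
    rw [hzdef, Complex.norm_exp, hqdef]
    congr 1
    simp
  set w : ℕ → ℂ := fun j => z * ((q : ℝ) : ℂ) ^ j with hwdef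
  have habsw : ∀ j, ‖w j‖ = q ^ (j + 1) := by
    intro j
    simp only [hwdef, norm_mul, norm_pow, hzabs, Complex.norm_real, Real.norm_eq_abs, abs_of_pos hq0]
    rw [pow_succ]; ring
  have hwle : ∀ j, ‖w j‖ ≤ q := by
    intro j
    rw [habsw j, pow_succ]
    calc q ^ j * q ≤ 1 * q := by gcongr; exact pow_le_one₀ hq0.le hq1.le
      _ = q := one_mul q
  have hwlt : ∀ j, ‖w j‖ < 1 := fun j => lt_of_le_of_lt (hwle j) hq1
  have hne : ∀ j, 1 - w j ≠ 0 := by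
    intro j hc
    have hw1 : w j = 1 := by linear_combination -hc
    have := hwlt j
    rw [hw1] at this
    simp at this
  -- Taylor series of -log(1 - w j)
  have HS1 : ∀ j, HasSum (fun n : ℕ => (w j ^ n / n : ℂ)) (-Complex.log (1 - w j)) := by
    intro j
    have H := Complex.hasSum_taylorSeries_log (z := -(w j)) (by simpa using hwlt j)
    rw [show (1 : ℂ) + -(w j) = 1 - w j by ring] at H
    refine H.neg.congr_fun fun n => ?_
    rw [neg_pow (w j) n, pow_succ]
    ring_nf
    rw [mul_comm n 2, pow_mul]
    norm_num
  have HS3 : ∀ j, HasSum (fun k : ℕ => ((w j ^ (k + 1)).re / ((k : ℝ) + 1)))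
      (-(Complex.log (1 - w j)).re) := by
    intro j
    have hre := Complex.hasSum_re (HS1 j)
    simp only [Complex.neg_re] at hre
    have H := (hasSum_nat_add_iff'
        (f := fun n : ℕ => ((w j ^ n / n : ℂ)).re) 1).mpr hre
    simp only [Finset.range_one, Finset.sum_singleton, pow_zero, Nat.cast_zero, div_zero,
      Complex.zero_re, sub_zero] at H
    refine H.congr_fun fun k => ?_
    rw [Complex.div_natCast_re]
    push_cast
    ring_nf
  set F : ℕ → ℕ → ℝ :=
    fun k j => 2 * ((z ^ (k + 1)).re * (q ^ (k + 1)) ^ j / ((k : ℝ) + 1)) with hFdef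
  have hwre : ∀ j m : ℕ, (w j ^ m).re = (z ^ m).re * (q ^ m) ^ j := by
    intro j m
    have hwm : w j ^ m = z ^ m * ((((q ^ m) ^ j : ℝ)) : ℂ) := by
      rw [hwdef]; push_cast; ring
    rw [hwm, Complex.mul_re, Complex.ofReal_re, Complex.ofReal_im]
    ring
  have hFeq : ∀ k j, F k j = 2 * ((w j ^ (k + 1)).re / ((k : ℝ) + 1)) := by
    intro k j
    rw [hwre j (k + 1), hFdef]
  have hzre_le : ∀ m : ℕ, |(z ^ m).re| ≤ q ^ m := by
    intro m
    calc |(z ^ m).re| ≤ ‖z ^ m‖ := Complex.abs_re_le_norm _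
      _ = q ^ m := by rw [norm_pow, hzabs]
  have hGsum : Summable (Function.uncurry F) := by
    apply Summable.of_norm_bounded
      (g := fun p : ℕ × ℕ => (2 * q) * (q ^ p.1 * q ^ p.2))
    · exact ((summable_geometric_of_lt_one hq0.le hq1).mul_of_nonneg
        (summable_geometric_of_lt_one hq0.le hq1)
        (fun n => pow_nonneg hq0.le n) (fun n => pow_nonneg hq0.le n)).mul_left (2 * q)
    · rintro ⟨k, j⟩
      simp only [Function.uncurry, hFdef, Real.norm_eq_abs]
      have hk1 : (1 : ℝ) ≤ (k : ℝ) + 1 := by linarith [Nat.cast_nonneg (α := ℝ) k]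
      have habs : |2 * ((z ^ (k + 1)).re * (q ^ (k + 1)) ^ j / ((k : ℝ) + 1))|
          = 2 * (|(z ^ (k + 1)).re| * (q ^ (k + 1)) ^ j / ((k : ℝ) + 1)) := by
        rw [abs_mul, abs_div, abs_mul, abs_of_nonneg (pow_nonneg (pow_nonneg hq0.le _) j),
          abs_of_nonneg (by positivity : (0:ℝ) ≤ (k : ℝ) + 1)]
        norm_num
      rw [habs]
      have hle1 : (q ^ (k + 1)) ^ j ≤ q ^ j := by
        apply pow_le_pow_left₀ (pow_nonneg hq0.le _)
        calc q ^ (k + 1) ≤ q ^ 1 := pow_le_pow_of_le_one hq0.le hq1.le (by omega)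
          _ = q := pow_one q
      have h2 : |(z ^ (k + 1)).re| * (q ^ (k + 1)) ^ j / ((k : ℝ) + 1)
          ≤ q ^ (k + 1) * q ^ j := by
        calc |(z ^ (k + 1)).re| * (q ^ (k + 1)) ^ j / ((k : ℝ) + 1)
            ≤ |(z ^ (k + 1)).re| * (q ^ (k + 1)) ^ j / 1 := by
              apply div_le_div_of_nonneg_left (by positivity) one_pos hk1
          _ = |(z ^ (k + 1)).re| * (q ^ (k + 1)) ^ j := div_one _
          _ ≤ q ^ (k + 1) * q ^ j :=
              mul_le_mul (hzre_le _) hle1 (pow_nonneg (pow_nonneg hq0.le _) j)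
                (pow_nonneg hq0.le _)
      calc 2 * (|(z ^ (k + 1)).re| * (q ^ (k + 1)) ^ j / ((k : ℝ) + 1))
          ≤ 2 * (q ^ (k + 1) * q ^ j) := by linarith
        _ = 2 * q * (q ^ k * q ^ j) := by ring
  -- per-k identity
  have hinner : ∀ k : ℕ,
      Real.exp (-h * ((k : ℝ) + 1)) * Real.cos (β * ((k : ℝ) + 1))
          / (((k : ℝ) + 1) * Real.sinh (h * ((k : ℝ) + 1)))
        = ∑' j : ℕ, F k j := by
    intro k
    have hm0 : (0 : ℝ) < (k : ℝ) + 1 := by positivity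
    have hcast : ((k + 1 : ℕ) : ℝ) = (k : ℝ) + 1 := by push_cast; ring
    have hre : (z ^ (k + 1)).re
        = Real.exp (-2 * h * ((k : ℝ) + 1)) * Real.cos (β * ((k : ℝ) + 1)) := by
      rw [hzdef, ← Complex.exp_nat_mul, Complex.exp_re]
      congr 2
      · simp [hcast]
        ring
      · simp [hcast]
        ring
    have hqm : q ^ (k + 1) = Real.exp (-2 * h * ((k : ℝ) + 1)) := by
      rw [hqdef, ← Real.exp_nat_mul]
      congr 1
      rw [hcast]; ring
    have hqm1 : q ^ (k + 1) < 1 := pow_lt_one₀ hq0.le hq1 (by omega)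
    have hsum : ∑' j : ℕ, F k j
        = 2 * ((z ^ (k + 1)).re / ((k : ℝ) + 1)) * (1 - q ^ (k + 1))⁻¹ := by
      have hFj : ∀ j : ℕ, F k j
          = (2 * ((z ^ (k + 1)).re / ((k : ℝ) + 1))) * (q ^ (k + 1)) ^ j := by
        intro j; rw [hFdef]; ring
      rw [tsum_congr hFj, tsum_mul_left,
        tsum_geometric_of_lt_one (pow_nonneg hq0.le _) hqm1]
    rw [hsum, hre, hqm]
    -- pure real identity
    set m : ℝ := (k : ℝ) + 1 with hm
    set E : ℝ := Real.exp (h * m) with hE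
    have hE0 : 0 < E := Real.exp_pos _
    have hE1 : 1 < E := by
      rw [hE]
      rw [show (1:ℝ) = Real.exp 0 from (Real.exp_zero).symm]
      exact Real.exp_lt_exp.mpr (mul_pos hh hm0)
    have hexp1 : Real.exp (-h * m) = E⁻¹ := by
      rw [hE, ← Real.exp_neg]; congr 1; ring
    have hexp2 : Real.exp (-2 * h * m) = E⁻¹ * E⁻¹ := by
      rw [hE, ← Real.exp_neg, ← Real.exp_add]; congr 1; ring
    have hsinh : Real.sinh (h * m) = (E - E⁻¹) / 2 := by
      rw [Real.sinh_eq, hE, Real.exp_neg]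
    rw [hexp1, hexp2, hsinh]
    exact aux_ratio E (Real.cos (β * m)) m hm0.ne' hE1
  -- assemble
  have LHSeq : (∑' k : ℕ,
      Real.exp (-h * ((k : ℝ) + 1)) * Real.cos (β * ((k : ℝ) + 1))
        / (((k : ℝ) + 1) * Real.sinh (h * ((k : ℝ) + 1))))
      = -(2 * ∑' j : ℕ, (Complex.log (1 - w j)).re) := by
    rw [tsum_congr hinner]
    rw [← Summable.tsum_comm (f := F) hGsum]
    have houter : ∀ j : ℕ, (∑' k : ℕ, F k j)
        = 2 * (-(Complex.log (1 - w j)).re) := by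
      intro j
      rw [tsum_congr (fun k => hFeq k j)]
      exact ((HS3 j).mul_left 2).tsum_eq
    rw [tsum_congr houter]
    rw [tsum_mul_left, tsum_neg]
    ring
  -- summability of complex logs
  have hclog : Summable (fun j : ℕ => Complex.log (1 - w j)) := by
    apply Summable.of_norm_bounded
      (g := fun j : ℕ => (q * (1 - q)⁻¹ / 2 + 1) * q * q ^ j)
    · exact (summable_geometric_of_lt_one hq0.le hq1).mul_left _
    · intro j
      have hb := Complex.norm_log_one_add_le (z := -(w j)) (by simpa using hwlt j)
      rw [show (1 : ℂ) + -(w j) = 1 - w j by ring] at hb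
      have hnw : ‖-(w j)‖ = q ^ (j + 1) := by
        rw [norm_neg]; exact habsw j
      rw [hnw] at hb
      have hqj1 : q ^ (j + 1) ≤ q := by
        calc q ^ (j + 1) ≤ q ^ 1 := pow_le_pow_of_le_one hq0.le hq1.le (by omega)
          _ = q := pow_one q
      have hinv : (1 - q ^ (j + 1))⁻¹ ≤ (1 - q)⁻¹ := by
        apply inv_anti₀ (by linarith)
        linarith
      have hstep : (q ^ (j + 1)) ^ 2 * (1 - q ^ (j + 1))⁻¹ / 2 + q ^ (j + 1)
          ≤ (q * (1 - q)⁻¹ / 2 + 1) * q ^ (j + 1) := by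
        have h1 : (q ^ (j + 1)) ^ 2 * (1 - q ^ (j + 1))⁻¹
            ≤ (q * q ^ (j + 1)) * (1 - q)⁻¹ := by
          apply mul_le_mul ?_ hinv ?_ ?_
          · rw [sq]
            exact mul_le_mul_of_nonneg_right hqj1 (pow_nonneg hq0.le _)
          · exact inv_nonneg.mpr (by linarith)
          · positivity
        have hrhs : (q * (1 - q)⁻¹ / 2 + 1) * q ^ (j + 1)
            = q * q ^ (j + 1) * (1 - q)⁻¹ / 2 + q ^ (j + 1) := by ring
        rw [hrhs]
        linarith
      calc ‖Complex.log (1 - w j)‖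
          ≤ (q ^ (j + 1)) ^ 2 * (1 - q ^ (j + 1))⁻¹ / 2 + q ^ (j + 1) := hb
        _ ≤ (q * (1 - q)⁻¹ / 2 + 1) * q ^ (j + 1) := hstep
        _ = (q * (1 - q)⁻¹ / 2 + 1) * q * q ^ j := by rw [pow_succ]; ring
  -- product identity
  have hprod : Complex.exp (∑' j : ℕ, Complex.log (1 - w j)) = ∏' j : ℕ, (1 - w j) := by
    exact Complex.cexp_tsum_eq_tprod hne hclog
  have hfun : (fun j : ℕ => 1 - Complex.exp (-2 * h + Complex.I * β)
      * Complex.exp (-2 * (h : ℂ)) ^ j) = fun j => 1 - w j := by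
    funext j
    rw [hQ, hwdef, hzdef]
  rw [show (fun j : ℕ => 1 - Complex.exp (-2 * ↑h + Complex.I * ↑β)
      * Complex.exp (-2 * ↑h) ^ j) = fun j => 1 - w j from hfun]
  rw [← hprod, Complex.norm_exp]
  have hretsum : (∑' j : ℕ, Complex.log (1 - w j)).re
      = ∑' j : ℕ, (Complex.log (1 - w j)).re :=
    (Complex.hasSum_re hclog.hasSum).tsum_eq.symm
  rw [hretsum]
  rw [show (∑' k : ℕ, Real.exp (-h * ((k : ℝ) + 1)) * Real.cos (β * ((k : ℝ) + 1))
      / (((k : ℝ) + 1) * Real.sinh (h * ((k : ℝ) + 1)))) = _ from LHSeq]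
  rw [neg_neg, two_mul, Real.exp_add, sq]
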